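/- Let μ be an atomless probability measure on ℝ with cumulative distribution function F, let N ≥ 1, and let μ_N be the probability measure on ℝ^N with density (t_1, …, t_N) ↦ N^N · 1_{t_1 ≥ ⋯ ≥ t_N} · ∏_{i=1}^N F(t_N)/F(t_i) with respect to μ^{⊗N} (density 0 where some F(t_i) = 0). Then for every real t with F(t) > 0, the μ_N-measure of the set of vectors all of whose coordinates are strictly greater than t equals ∫_0^{−log F(t)} (N^N/(N−1)!) · u^{N−1} e^{−Nu} du. -/

import Mathlib

open MeasureTheory
open scoped ENNReal

/-- The cumulative distribution function of a measure on `ℝ`. -/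
noncomputable def cdf' (μ : Measure ℝ) : ℝ → ℝ := fun x => (μ (Set.Iic x)).toReal

open Set Filter Topology Function

section Basics
variable {μ : Measure ℝ}

lemma cdf'_mono [IsFiniteMeasure μ] : Monotone (cdf' μ) := fun a b hab =>
  ENNReal.toReal_mono (measure_ne_top μ _) (measure_mono (Set.Iic_subset_Iic.2 hab))

lemma cdf'_nonneg (x : ℝ) : 0 ≤ cdf' μ x := ENNReal.toReal_nonneg

lemma ofReal_cdf' [IsFiniteMeasure μ] (x : ℝ) :
    ENNReal.ofReal (cdf' μ x) = μ (Set.Iic x) := ENNReal.ofReal_toReal (measure_ne_top μ _)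

lemma cdf'_le_one [IsProbabilityMeasure μ] (x : ℝ) : cdf' μ x ≤ 1 := by
  have h : μ (Set.Iic x) ≤ 1 := prob_le_one
  simpa [cdf'] using ENNReal.toReal_mono (by simp) h

lemma measurable_cdf' [IsFiniteMeasure μ] : Measurable (cdf' μ) := cdf'_mono.measurable

lemma cdf'_eq_cdf [IsProbabilityMeasure μ] : cdf' μ = ⇑(ProbabilityTheory.cdf μ) := by
  funext x; rw [ProbabilityTheory.cdf_eq_real]; rfl

end Basics

section Map
variable (μ : Measure ℝ) [IsProbabilityMeasure μ] [NullSingletonClass μ]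

lemma measure_cdf'_le {y : ℝ} (h0 : 0 ≤ y) (h1 : y < 1) :
    μ {x | cdf' μ x ≤ y} = ENNReal.ofReal y := by
  set S := {x | cdf' μ x ≤ y} with hSdef
  by_cases hS : S.Nonempty
  · -- bounded above
    have hbdd : BddAbove S := by
      have : ∀ᶠ b in atTop, y < cdf' μ b := by
        rw [cdf'_eq_cdf]
        exact (ProbabilityTheory.tendsto_cdf_atTop μ).eventually_const_lt h1
      obtain ⟨b, hb⟩ := this.exists
      exact ⟨b, fun x hx => by
        by_contra hxb
        exact absurd (cdf'_mono (le_of_not_ge hxb)) (not_le.2 (lt_of_le_of_lt hx hb))⟩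
    set a := sSup S with ha
    have hIio : Iio a ⊆ S := by
      intro x hx
      obtain ⟨z, hz, hxz⟩ := exists_lt_of_lt_csSup hS hx
      exact le_trans (cdf'_mono hxz.le) hz
    have hIic : S ⊆ Iic a := fun x hx => le_csSup hbdd hx
    have hμS : μ S = μ (Iic a) := by
      refine le_antisymm (measure_mono hIic) ?_
      calc μ (Iic a) = μ (Iio a) := (measure_congr (Iio_ae_eq_Iic (a := a))).symm
        _ ≤ μ S := measure_mono hIio
    have hupper : μ (Iic a) ≤ ENNReal.ofReal y := by
      have hmono : Monotone (fun n : ℕ => Iic (a - 1 / (n + 1))) := by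
        intro m n hmn
        apply Iic_subset_Iic.2
        have h2 : (1:ℝ) / (n + 1) ≤ 1 / (m + 1) := by
          apply one_div_le_one_div_of_le (by positivity) (by exact_mod_cast by omega)
        linarith
      have hU : (⋃ n : ℕ, Iic (a - 1 / (n + 1))) = Iio a := by
        ext x
        simp only [mem_iUnion, mem_Iic, mem_Iio]
        constructor
        · rintro ⟨n, hn⟩
          have : (0:ℝ) < 1 / (n + 1) := by positivity
          linarith
        · intro hx
          obtain ⟨n, hn⟩ := exists_nat_one_div_lt (sub_pos.2 hx)
          exact ⟨n, by linarith⟩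
      have := tendsto_measure_iUnion_atTop (μ := μ) hmono
      rw [hU] at this
      have hle : ∀ n : ℕ, μ (Iic (a - 1 / (n + 1))) ≤ ENNReal.ofReal y := by
        intro n
        have hmem : a - 1 / (n + 1) ∈ S := hIio (by simp only [mem_Iio]; exact sub_lt_self _ (by positivity))
        rw [← ofReal_cdf']
        exact ENNReal.ofReal_le_ofReal hmem
      calc μ (Iic a) = μ (Iio a) := (measure_congr (Iio_ae_eq_Iic (a := a))).symm
        _ ≤ ENNReal.ofReal y := le_of_tendsto' this hle
    have hlower : ENNReal.ofReal y ≤ μ (Iic a) := by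
      have hanti : Antitone (fun n : ℕ => Iic (a + 1 / (n + 1))) := by
        intro m n hmn
        apply Iic_subset_Iic.2
        have h2 : (1:ℝ) / (n + 1) ≤ 1 / (m + 1) := by
          apply one_div_le_one_div_of_le (by positivity) (by exact_mod_cast by omega)
        linarith
      have hI : (⋂ n : ℕ, Iic (a + 1 / (n + 1))) = Iic a := by
        ext x
        simp only [mem_iInter, mem_Iic]
        constructor
        · intro hx
          by_contra hax
          push_neg at hax
          obtain ⟨n, hn⟩ := exists_nat_one_div_lt (sub_pos.2 hax)
          have := hx n
          linarith
        · intro hx n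
          have : (0:ℝ) < 1 / (n + 1) := by positivity
          linarith
      have := tendsto_measure_iInter_atTop (μ := μ)
        (fun n => (measurableSet_Iic).nullMeasurableSet) hanti ⟨0, measure_ne_top μ _⟩
      rw [hI] at this
      refine ge_of_tendsto' this fun n => ?_
      simp only [Function.comp_apply]
      have hnotmem : a + 1 / (n + 1) ∉ S := by
        intro hmem
        have := hIic hmem
        simp only [mem_Iic] at this
        have h3 : (0:ℝ) < 1/(n+1) := by positivity
        linarith
      have : y ≤ cdf' μ (a + 1 / (n + 1)) := le_of_not_ge hnotmem
      rw [← ofReal_cdf']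
      exact ENNReal.ofReal_le_ofReal this
    rw [hμS]
    exact le_antisymm hupper hlower
  · rw [not_nonempty_iff_eq_empty] at hS
    rw [hS]
    have hy : y = 0 := by
      by_contra hy0
      have hypos : 0 < y := lt_of_le_of_ne h0 (Ne.symm hy0)
      have : ∀ᶠ x in atBot, cdf' μ x < y := by
        rw [cdf'_eq_cdf]
        exact (ProbabilityTheory.tendsto_cdf_atBot μ).eventually_lt_const hypos
      obtain ⟨x, hx⟩ := this.exists
      have : x ∈ S := le_of_lt hx
      simp [hS] at this
    simp [hy]

lemma cdf'_map : μ.map (cdf' μ) = volume.restrict (Set.Ioc 0 1) := by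
  refine Measure.ext_of_Iic _ _ fun y => ?_
  rw [Measure.map_apply measurable_cdf' measurableSet_Iic]
  rcases lt_or_ge y 0 with hy | hy
  · have h1 : cdf' μ ⁻¹' Iic y = ∅ := by
      ext x; simp only [mem_preimage, mem_Iic, mem_empty_iff_false, iff_false, not_le]
      exact lt_of_lt_of_le hy (cdf'_nonneg x)
    rw [h1, Measure.restrict_apply measurableSet_Iic]
    have : Ioc (0:ℝ) 1 ∩ Iic y = ∅ := by
      ext x; simp only [mem_inter_iff, mem_Ioc, mem_Iic, mem_empty_iff_false, iff_false]
      rintro ⟨⟨h2, _⟩, h3⟩; linarith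
    rw [measure_empty]
    rw [Set.inter_comm] at this
    rw [this, measure_empty]
  · rcases lt_or_ge y 1 with hy1 | hy1
    · have := measure_cdf'_le μ hy hy1
      rw [show cdf' μ ⁻¹' Iic y = {x | cdf' μ x ≤ y} from rfl, this]
      rw [Measure.restrict_apply measurableSet_Iic]
      have : Iic y ∩ Ioc (0:ℝ) 1 = Ioc 0 y := by
        ext x; simp only [mem_inter_iff, mem_Ioc, mem_Iic]
        constructor
        · rintro ⟨h1, h2, h3⟩; exact ⟨h2, h1⟩
        · rintro ⟨h1, h2⟩; exact ⟨h2, h1, by linarith⟩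
      rw [this, Real.volume_Ioc]
      simp
    · have h1 : cdf' μ ⁻¹' Iic y = univ := by
        ext x; simp only [mem_preimage, mem_Iic, mem_univ, iff_true]
        exact le_trans (cdf'_le_one x) hy1
      rw [h1, measure_univ, Measure.restrict_apply measurableSet_Iic]
      have : Iic y ∩ Ioc (0:ℝ) 1 = Ioc 0 1 := by
        ext x; simp only [mem_inter_iff, mem_Ioc, mem_Iic]
        constructor
        · rintro ⟨_, h2, h3⟩; exact ⟨h2, h3⟩
        · rintro ⟨h2, h3⟩; exact ⟨by linarith, h2, h3⟩
      rw [this, Real.volume_Ioc]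
      simp

lemma lintegral_comp_cdf' {g : ℝ → ℝ≥0∞} (hg : Measurable g) :
    ∫⁻ x, g (cdf' μ x) ∂μ = ∫⁻ z in Set.Ioc (0:ℝ) 1, g z := by
  rw [← cdf'_map μ, lintegral_map hg measurable_cdf']

lemma measure_cdf'_eq (a : ℝ) : μ {x | cdf' μ x = a} = 0 := by
  have : {x | cdf' μ x = a} = cdf' μ ⁻¹' {a} := rfl
  rw [this, ← Measure.map_apply measurable_cdf' (measurableSet_singleton a), cdf'_map]
  exact le_antisymm (le_trans (Measure.restrict_le_self _) (by simp)) (zero_le)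

end Map

section Calc

lemma integral_Npow {N : ℕ} (hN : 1 ≤ N) (m : ℝ) :
    ∫ x in (0:ℝ)..m, ((N:ℝ) * x ^ (N - 1)) = m ^ N := by
  obtain ⟨M, rfl⟩ : ∃ M, N = M + 1 := ⟨N - 1, by omega⟩
  rw [intervalIntegral.integral_const_mul, integral_pow]
  simp only [Nat.add_sub_cancel]
  have : ((M:ℝ) + 1) ≠ 0 := by positivity
  push_cast
  field_simp
  simp

lemma lintegral_Ioo_Npow {N : ℕ} (hN : 1 ≤ N) {m : ℝ} (hm : 0 < m) :
    ∫⁻ x in Set.Ioo 0 m, ENNReal.ofReal ((N:ℝ) * x ^ (N - 1)) = ENNReal.ofReal (m ^ N) := by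
  have hcont : Continuous fun x : ℝ => (N:ℝ) * x ^ (N - 1) := by continuity
  rw [← ofReal_integral_eq_lintegral_ofReal]
  · rw [← MeasureTheory.integral_Ioc_eq_integral_Ioo, ← intervalIntegral.integral_of_le hm.le,
      integral_Npow hN]
  · exact (hcont.integrableOn_Icc).mono_set Set.Ioo_subset_Icc_self
  · filter_upwards [ae_restrict_mem measurableSet_Ioo] with x hx
    have := hx.1
    positivity

end Calc

section Phi
variable (μ : Measure ℝ) [IsProbabilityMeasure μ] [NullSingletonClass μ]

lemma lintegral_Ioc_inv {b : ℝ} (hb : 0 < b) :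
    ∫⁻ z in Set.Ioc b 1, ENNReal.ofReal z⁻¹ = ENNReal.ofReal (-Real.log b) := by
  rcases lt_or_ge b 1 with hb1 | hb1
  · rw [← ofReal_integral_eq_lintegral_ofReal]
    · rw [← intervalIntegral.integral_of_le hb1.le, integral_inv]
      · rw [one_div, Real.log_inv]
      · rw [Set.uIcc_of_le hb1.le]
        intro h
        exact absurd (h.1) (not_le.2 hb)
    · refine (ContinuousOn.integrableOn_Icc ?_).mono_set Set.Ioc_subset_Icc_self
      exact continuousOn_inv₀.mono (fun z hz => by
        simp only [Set.mem_compl_iff, Set.mem_singleton_iff]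
        intro h; rw [h] at hz; exact absurd hz.1 (not_le.2 hb))
    · filter_upwards [ae_restrict_mem measurableSet_Ioc] with z hz
      exact inv_nonneg.2 (le_trans hb.le hz.1.le)
  · rw [Set.Ioc_eq_empty (not_lt.2 hb1), Measure.restrict_empty, lintegral_zero_measure]
    symm
    rw [ENNReal.ofReal_eq_zero]
    simpa using Real.log_nonneg hb1

lemma phi_eq {t x : ℝ} (hx : 0 < x) :
    ∫⁻ y, (if t < y ∧ x < cdf' μ y then ENNReal.ofReal (cdf' μ y)⁻¹ else 0) ∂μ
      = ENNReal.ofReal (-Real.log (max x (cdf' μ t))) := by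
  set F := cdf' μ with hF
  set c := F t with hc
  set b := max x c with hbdef
  have hb : 0 < b := lt_max_of_lt_left hx
  have hae : ∀ᵐ y ∂μ,
      (if t < y ∧ x < F y then ENNReal.ofReal (F y)⁻¹ else 0)
        = (if b < F y then ENNReal.ofReal (F y)⁻¹ else 0) := by
    filter_upwards [compl_mem_ae_iff.2 (measure_cdf'_eq μ c)] with y hy
    simp only [Set.mem_compl_iff, Set.mem_setOf_eq] at hy
    by_cases h1 : t < y ∧ x < F y
    · rw [if_pos h1, if_pos]
      refine max_lt h1.2 (lt_of_le_of_ne (cdf'_mono h1.1.le) ?_)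
      exact fun h => hy h.symm
    · rw [if_neg h1, if_neg]
      intro hbF
      refine h1 ⟨?_, lt_of_le_of_lt (le_max_left x c) hbF⟩
      by_contra hty
      exact absurd (cdf'_mono (le_of_not_gt hty)) (not_le.2 (lt_of_le_of_lt (le_max_right x c) hbF))
  rw [lintegral_congr_ae hae]
  have hg : Measurable fun z : ℝ => (if b < z then ENNReal.ofReal z⁻¹ else 0) := by
    refine Measurable.ite (measurableSet_lt measurable_const measurable_id) ?_ measurable_const
    exact ENNReal.measurable_ofReal.comp (measurable_inv)
  have := lintegral_comp_cdf' μ hg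
  rw [this]
  have hind : ∀ z : ℝ, (if b < z then ENNReal.ofReal z⁻¹ else 0)
      = Set.indicator (Set.Ioi b) (fun z => ENNReal.ofReal z⁻¹) z := by
    intro z
    rw [Set.indicator_apply]
    simp [Set.mem_Ioi]
  simp_rw [hind]
  rw [lintegral_indicator measurableSet_Ioi, Measure.restrict_restrict measurableSet_Ioi]
  have hset : Set.Ioi b ∩ Set.Ioc 0 1 = Set.Ioc b 1 := by
    ext z
    simp only [Set.mem_inter_iff, Set.mem_Ioi, Set.mem_Ioc]
    constructor
    · rintro ⟨h1, _, h3⟩; exact ⟨h1, h3⟩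
    · rintro ⟨h1, h2⟩; exact ⟨h1, lt_trans hb h1, h2⟩
  rw [hset, lintegral_Ioc_inv hb]

end Phi

section PiLemmas
variable (μ : Measure ℝ) [SigmaFinite μ]

lemma lintegral_pi_pow {n : ℕ} {g : ℝ → ℝ≥0∞} (hg : Measurable g) :
    ∫⁻ v : Fin n → ℝ, ∏ i, g (v i) ∂(Measure.pi fun _ : Fin n => μ)
      = (∫⁻ x, g x ∂μ) ^ n := by
  induction n with
  | zero =>
      simp only [Finset.univ_eq_empty, Finset.prod_empty, pow_zero, lintegral_one]
      exact Measure.pi_empty_univ _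
  | succ n ih =>
      have hmp := (MeasureTheory.measurePreserving_piFinSuccAbove
        (fun _ : Fin (n + 1) => μ) 0)
      have hmeas : Measurable fun p : ℝ × (Fin n → ℝ) => g p.1 * ∏ i, g (p.2 i) := by
        refine (hg.comp measurable_fst).mul ?_
        exact Finset.measurable_prod _ fun i _ =>
          hg.comp ((measurable_pi_apply i).comp measurable_snd)
      have key : ∫⁻ v : Fin (n+1) → ℝ, ∏ i, g (v i) ∂(Measure.pi fun _ => μ)
          = ∫⁻ p : ℝ × (Fin n → ℝ), g p.1 * ∏ i, g (p.2 i)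
              ∂(μ.prod (Measure.pi fun _ : Fin n => μ)) := by
        rw [← hmp.lintegral_comp hmeas]
        congr 1
        funext v
        simp only [MeasurableEquiv.piFinSuccAbove_apply, Fin.prod_univ_succ, Fin.zero_succAbove]
        rfl
      have h2 := lintegral_prod_mul (μ := μ) (ν := Measure.pi fun _ : Fin n => μ)
        (f := g) (g := fun w : Fin n → ℝ => ∏ i, g (w i)) hg.aemeasurable
        (Finset.measurable_prod _ fun i _ => hg.comp (measurable_pi_apply i)).aemeasurable
      rw [key, h2, ih, pow_succ]
      ring

lemma pi_pair_eq_zero {n : ℕ} [NullSingletonClass μ] {i j : Fin n} (hij : i ≠ j) :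
    (Measure.pi fun _ : Fin n => μ) {v | v i = v j} = 0 := by
  classical
  set p : Fin n → Prop := fun k => k = i with hp
  have hmp := MeasureTheory.measurePreserving_piEquivPiSubtypeProd
    (fun _ : Fin n => μ) p
  set s : (({k // p k} → ℝ) × ({k // ¬ p k} → ℝ)) → Prop :=
    fun y => y.1 ⟨i, rfl⟩ = y.2 ⟨j, fun h => hij h.symm⟩ with hs
  have hsm : MeasurableSet {y | s y} := by
    exact measurableSet_eq_fun
      (measurable_fst.eval)
      (measurable_snd.eval)
  have hpre : (MeasurableEquiv.piEquivPiSubtypeProd (fun _ : Fin n => ℝ) p) ⁻¹' {y | s y}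
      = {v | v i = v j} := rfl
  rw [← hpre, hmp.measure_preimage hsm.nullMeasurableSet]
  rw [Measure.prod_apply hsm]
  have : ∀ a : {k // p k} → ℝ,
      (Measure.pi fun _ : {k // ¬ p k} => μ)
        (Prod.mk a ⁻¹' {y | s y}) = 0 := by
    intro a
    have : (Prod.mk a ⁻¹' {y | s y})
        = {b : {k // ¬ p k} → ℝ | b ⟨j, fun h => hij h.symm⟩ = a ⟨i, rfl⟩} := by
      ext b
      simp only [Set.mem_preimage, Set.mem_setOf_eq, hs]
      exact eq_comm
    rw [this]
    exact Measure.pi_hyperplane _ _ _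
  simp only [this]
  simp

lemma ae_injective {n : ℕ} [NullSingletonClass μ] :
    ∀ᵐ v ∂(Measure.pi fun _ : Fin n => μ), Function.Injective v := by
  have : {v : Fin n → ℝ | ¬ Function.Injective v}
      ⊆ ⋃ (i : Fin n) (j : Fin n) (_ : i ≠ j), {v : Fin n → ℝ | v i = v j} := by
    intro v hv
    simp only [Set.mem_setOf_eq, Function.Injective, not_forall] at hv
    obtain ⟨a, b, hab, hne⟩ := hv
    exact Set.mem_iUnion.2 ⟨a, Set.mem_iUnion.2 ⟨b, Set.mem_iUnion.2 ⟨hne, hab⟩⟩⟩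
  rw [ae_iff]
  refine measure_mono_null (fun v hv => this hv) ?_
  refine measure_iUnion_null fun i => measure_iUnion_null fun j => measure_iUnion_null fun hij =>
    pi_pair_eq_zero μ hij

end PiLemmas

lemma antitone_sort_existsUnique {n : ℕ} {v : Fin n → ℝ} (hv : Function.Injective v) :
    ∃! σ : Equiv.Perm (Fin n), Antitone (v ∘ σ) := by
  classical
  set w : Fin n → ℝ := fun i => -(v i) with hw
  have key : ∀ σ : Equiv.Perm (Fin n), Antitone (v ∘ σ) ↔ σ = Tuple.sort w := by
    intro σ
    rw [Tuple.eq_sort_iff]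
    constructor
    · intro h
      constructor
      · intro a b hab
        simp only [Function.comp_apply, hw, neg_le_neg_iff]
        exact h hab
      · intro a b hab heq
        simp only [hw, neg_inj] at heq
        exact absurd (σ.injective (hv heq)) (ne_of_lt hab)
    · rintro ⟨h1, _⟩
      intro a b hab
      have := h1 hab
      simp only [Function.comp_apply, hw, neg_le_neg_iff] at this
      exact this
  exact ⟨Tuple.sort w, (key _).2 rfl, fun σ hσ => (key σ).1 hσ⟩

lemma subst_exp {N : ℕ} (hN : 1 ≤ N) {c : ℝ} (hc : 0 < c) (hc1 : c ≤ 1) :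
    ∫ x in c..1, ((N:ℝ) * x ^ (N - 1) * (-Real.log x) ^ N)
      = ∫ u in (0:ℝ)..(-Real.log c), (u ^ N * ((N:ℝ) * Real.exp (-(N:ℝ) * u))) := by
  set s := -Real.log c with hs
  have hs0 : 0 ≤ s := by
    rw [hs, neg_nonneg]
    exact Real.log_nonpos hc.le hc1
  have hexps : Real.exp (-s) = c := by
    rw [hs, neg_neg, Real.exp_log hc]
  set g₃ : ℝ → ℝ := fun x => (N:ℝ) * (max x (c/2)) ^ (N - 1) * (-Real.log (max x (c/2))) ^ N
    with hg₃
  have hg₃pos : ∀ x : ℝ, max x (c/2) ≠ 0 := fun x =>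
    ne_of_gt (lt_of_lt_of_le (by positivity) (le_max_right _ _))
  have hg₃cont : Continuous g₃ := by
    have hmax : Continuous fun x : ℝ => max x (c/2) := continuous_id.max continuous_const
    exact (continuous_const.mul (hmax.pow _)).mul (((hmax.log hg₃pos).neg).pow _)
  have hfder : ∀ u ∈ Set.uIcc (0:ℝ) s,
      HasDerivAt (fun u : ℝ => Real.exp (-u)) (-Real.exp (-u)) u := by
    intro u _
    have h := HasDerivAt.comp u (Real.hasDerivAt_exp (-u)) (hasDerivAt_neg u)
    exact (by simpa [mul_comm] using h : HasDerivAt (Real.exp ∘ Neg.neg) (-Real.exp (-u)) u)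
  have hf'cont : ContinuousOn (fun u : ℝ => -Real.exp (-u)) (Set.uIcc (0:ℝ) s) :=
    ((Real.continuous_exp.comp continuous_neg).neg).continuousOn
  have hcv := intervalIntegral.integral_comp_smul_deriv hfder hf'cont hg₃cont
  -- hcv : ∫ u in 0..s, (-exp (-u)) • g₃ (exp (-u)) = ∫ x in exp (-0) .. exp (-s), g₃ x
  have hends : ∫ x in Real.exp (-(0:ℝ))..Real.exp (-s), g₃ x = ∫ x in (1:ℝ)..c, g₃ x := by
    rw [neg_zero, Real.exp_zero, hexps]
  rw [hends] at hcv
  simp only [Function.comp_def] at hcv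
  have hg₃eq : ∀ x ∈ Set.uIcc c 1, g₃ x = (N:ℝ) * x ^ (N - 1) * (-Real.log x) ^ N := by
    intro x hx
    rw [Set.uIcc_of_le hc1] at hx
    have : max x (c/2) = x := max_eq_left (le_trans (by linarith) hx.1)
    rw [hg₃]
    simp only [this]
  have h1 : ∫ x in c..1, ((N:ℝ) * x ^ (N - 1) * (-Real.log x) ^ N) = ∫ x in c..1, g₃ x :=
    (intervalIntegral.integral_congr (fun x hx => (hg₃eq x hx).symm))
  have h2 : ∀ u ∈ Set.uIcc (0:ℝ) s,
      (-Real.exp (-u)) • g₃ (Real.exp (-u)) = -(u ^ N * ((N:ℝ) * Real.exp (-(N:ℝ) * u))) := by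
    intro u hu
    rw [Set.uIcc_of_le hs0] at hu
    have hle : c ≤ Real.exp (-u) := by
      rw [← hexps]
      exact Real.exp_le_exp.2 (by linarith [hu.2])
    have hmax : max (Real.exp (-u)) (c/2) = Real.exp (-u) :=
      max_eq_left (le_trans (by linarith) hle)
    have hlog : -Real.log (Real.exp (-u)) = u := by rw [Real.log_exp]; ring
    have hpow : Real.exp (-u) * Real.exp (-u) ^ (N - 1) = Real.exp (-(N:ℝ) * u) := by
      have h3 : Real.exp (-u) * Real.exp (-u) ^ (N - 1) = Real.exp (-u) ^ N := by
        rw [← pow_succ']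
        congr 1
        omega
      rw [h3, ← Real.exp_nat_mul]
      congr 1
      ring
    rw [hg₃]
    simp only [hmax, hlog, smul_eq_mul]
    calc -Real.exp (-u) * ((N:ℝ) * Real.exp (-u) ^ (N - 1) * u ^ N)
        = -(u ^ N * ((N:ℝ) * (Real.exp (-u) * Real.exp (-u) ^ (N - 1)))) := by ring
      _ = -(u ^ N * ((N:ℝ) * Real.exp (-(N:ℝ) * u))) := by rw [hpow]
  have h3 : ∫ u in (0:ℝ)..s, (-Real.exp (-u)) • g₃ (Real.exp (-u))
      = ∫ u in (0:ℝ)..s, -(u ^ N * ((N:ℝ) * Real.exp (-(N:ℝ) * u))) :=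
    intervalIntegral.integral_congr h2
  rw [h3] at hcv
  rw [intervalIntegral.integral_neg] at hcv
  have h4 : ∫ x in (1:ℝ)..c, g₃ x = -∫ x in c..1, g₃ x := intervalIntegral.integral_symm c 1
  rw [h1]
  rw [h4] at hcv
  linarith

lemma ibp_exp {N : ℕ} (hN : 1 ≤ N) {s : ℝ} (hs : 0 ≤ s) :
    ∫ u in (0:ℝ)..s, (u ^ N * ((N:ℝ) * Real.exp (-(N:ℝ) * u)))
      = -(s ^ N * Real.exp (-(N:ℝ) * s))
        + ∫ u in (0:ℝ)..s, ((N:ℝ) * (u ^ (N - 1) * Real.exp (-(N:ℝ) * u))) := by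
  have hu : ∀ x ∈ Set.uIcc (0:ℝ) s, HasDerivAt (fun x : ℝ => x ^ N) ((N:ℝ) * x ^ (N - 1)) x :=
    fun x _ => hasDerivAt_pow N x
  have hv : ∀ x ∈ Set.uIcc (0:ℝ) s,
      HasDerivAt (fun x : ℝ => -Real.exp (-(N:ℝ) * x)) ((N:ℝ) * Real.exp (-(N:ℝ) * x)) x := by
    intro x _
    have h1 : HasDerivAt (fun x : ℝ => -(N:ℝ) * x) (-(N:ℝ)) x := by
      simpa using (hasDerivAt_id x).const_mul (-(N:ℝ))
    have h2 := h1.exp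
    have h3 : HasDerivAt (fun x : ℝ => -Real.exp (-(N:ℝ) * x)) (-(Real.exp (-(N:ℝ) * x) * -(N:ℝ))) x := h2.neg
    convert h3 using 1
    ring
  have hu' : IntervalIntegrable (fun x : ℝ => (N:ℝ) * x ^ (N - 1)) volume 0 s :=
    (continuous_const.mul (continuous_pow _)).intervalIntegrable _ _
  have hv' : IntervalIntegrable (fun x : ℝ => (N:ℝ) * Real.exp (-(N:ℝ) * x)) volume 0 s :=
    (continuous_const.mul (Real.continuous_exp.comp (continuous_const.mul continuous_id))).intervalIntegrable _ _
  have key := intervalIntegral.integral_mul_deriv_eq_deriv_mul hu hv hu' hv'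
  rw [key]
  have h0 : (0:ℝ) ^ N = 0 := zero_pow (by omega)
  rw [h0]
  have : ∫ x in (0:ℝ)..s, (N:ℝ) * x ^ (N - 1) * -Real.exp (-(N:ℝ) * x)
      = -∫ x in (0:ℝ)..s, ((N:ℝ) * (x ^ (N - 1) * Real.exp (-(N:ℝ) * x))) := by
    rw [← intervalIntegral.integral_neg]
    apply intervalIntegral.integral_congr
    intro x _
    ring
  rw [this]
  ring

set_option maxHeartbeats 2000000 in
/-- **Probability that all coordinates exceed `t` under `μ_N`.**
Let `μ` be an atomless probability measure on `ℝ` with distribution function `F` and let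
`μ_N` be the measure on `ℝ^N` with density `N^N 1_{t_1 ≥ ⋯ ≥ t_N} ∏_i F(t_N)/F(t_i)` with
respect to `μ^{⊗N}`.  For every `t` with `F(t) > 0`, the `μ_N`-measure of the set of
vectors all of whose coordinates are `> t` equals
`∫_0^{-log F(t)} (N^N/(N-1)!) u^{N-1} e^{-Nu} du`. -/
theorem muN_measure_all_exceed (μ : Measure ℝ) [IsProbabilityMeasure μ] [NullSingletonClass μ]
    (N : ℕ) (hN : 1 ≤ N) (t : ℝ) (ht : 0 < cdf' μ t) :
    ((Measure.pi fun _ : Fin N => μ).withDensity fun v =>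
        ENNReal.ofReal
          (if Antitone v ∧ ∀ i : Fin N, cdf' μ (v i) ≠ 0 then
            (N : ℝ) ^ N * ∏ i : Fin N, cdf' μ (v ⟨N - 1, by omega⟩) / cdf' μ (v i)
          else 0))
      {v : Fin N → ℝ | ∀ i : Fin N, t < v i} =
        ENNReal.ofReal
          (∫ u in (0 : ℝ)..(-Real.log (cdf' μ t)),
            (N : ℝ) ^ N / ((N - 1).factorial : ℝ) * u ^ (N - 1) * Real.exp (-(N : ℝ) * u)) := by
  classical
  have hFinNe : Nonempty (Fin N) := ⟨⟨0, by omega⟩⟩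
  set c : ℝ := cdf' μ t with hcdef
  have hc1 : c ≤ 1 := cdf'_le_one t
  set s : ℝ := -Real.log c with hsdef
  have hs0 : 0 ≤ s := by rw [hsdef, neg_nonneg]; exact Real.log_nonpos ht.le hc1
  set π : Measure (Fin N → ℝ) := Measure.pi fun _ : Fin N => μ with hπdef
  set A : Set (Fin N → ℝ) := {v | ∀ i : Fin N, t < v i} with hAdef
  have hAm : MeasurableSet A := by
    have : A = ⋂ i : Fin N, {v : Fin N → ℝ | t < v i} := by
      ext v; simp [hAdef]
    rw [this]
    exact MeasurableSet.iInter fun i =>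
      measurableSet_lt measurable_const (measurable_pi_apply i)
  -- building blocks
  set g : ℝ → ℝ → ℝ≥0∞ :=
    fun x y => if t < y ∧ x < cdf' μ y then ENNReal.ofReal (cdf' μ y)⁻¹ else 0 with hgdef
  have hgm : ∀ x, Measurable (g x) := by
    intro x
    refine Measurable.ite ?_ (ENNReal.measurable_ofReal.comp (measurable_cdf'.inv)) measurable_const
    exact (measurableSet_lt measurable_const measurable_id).inter
      (measurableSet_lt measurable_const measurable_cdf')
  set Φ : ((Fin N → ℝ) × ℝ) → ℝ≥0∞ :=
    fun p => ENNReal.ofReal ((N:ℝ) * p.2 ^ (N - 1)) * ∏ i, g p.2 (p.1 i) with hΦdef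
  have hΦm : Measurable Φ := by
    refine Measurable.mul ?_ ?_
    · exact ENNReal.measurable_ofReal.comp
        ((measurable_const.mul (measurable_snd.pow_const _)))
    · refine Finset.measurable_prod _ fun i _ => ?_
      have hset : MeasurableSet {p : (Fin N → ℝ) × ℝ | t < p.1 i ∧ p.2 < cdf' μ (p.1 i)} :=
        (measurableSet_lt measurable_const ((measurable_pi_apply i).comp measurable_fst)).inter
          (measurableSet_lt measurable_snd
            (measurable_cdf'.comp ((measurable_pi_apply i).comp measurable_fst)))
      exact Measurable.ite hset
        (ENNReal.measurable_ofReal.comp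
          ((measurable_cdf'.comp ((measurable_pi_apply i).comp measurable_fst)).inv))
        measurable_const
  set h : (Fin N → ℝ) → ℝ≥0∞ :=
    fun v => ENNReal.ofReal ((N:ℝ) ^ N) * ∫⁻ x in Set.Ioi (0:ℝ), Φ (v, x) with hhdef
  have hhm : Measurable h :=
    measurable_const.mul (Measurable.lintegral_prod_right' hΦm)
  have hlastle : ∀ (v : Fin N → ℝ), Antitone v → ∀ i : Fin N, v ⟨N - 1, by omega⟩ ≤ v i := by
    intro v hv i
    exact hv (by
      rw [Fin.le_def]
      simp only
      omega)
  -- pointwise identification of the density with the layered form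
  have P1 : ∀ v : Fin N → ℝ,
      A.indicator (fun v => ENNReal.ofReal
        (if Antitone v ∧ ∀ i : Fin N, cdf' μ (v i) ≠ 0 then
          (N : ℝ) ^ N * ∏ i : Fin N, cdf' μ (v ⟨N - 1, by omega⟩) / cdf' μ (v i)
        else 0)) v
      = {w : Fin N → ℝ | Antitone w}.indicator h v := by
    intro v
    by_cases hvA : v ∈ A
    · rw [Set.indicator_of_mem hvA]
      by_cases hanti : Antitone v
      · rw [Set.indicator_of_mem (by exact hanti)]
        have htlt : ∀ i : Fin N, t < v i := hvA
        have hcle : ∀ i : Fin N, c ≤ cdf' μ (v i) := fun i => cdf'_mono (htlt i).le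
        have hne : ∀ i : Fin N, cdf' μ (v i) ≠ 0 :=
          fun i => ne_of_gt (lt_of_lt_of_le ht (hcle i))
        rw [if_pos ⟨hanti, hne⟩]
        -- min value
        set m : ℝ := Finset.univ.inf' (Finset.univ_nonempty) (fun i : Fin N => cdf' μ (v i))
          with hmdef
        have hmF : ∀ i : Fin N, m ≤ cdf' μ (v i) := fun i => Finset.inf'_le _ (Finset.mem_univ i)
        have hcm : c ≤ m := Finset.le_inf' _ _ fun i _ => hcle i
        have hm0 : 0 < m := lt_of_lt_of_le ht hcm
        have hmeq : cdf' μ (v ⟨N - 1, by omega⟩) = m := by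
          refine le_antisymm (Finset.le_inf' _ _ fun i _ => cdf'_mono (hlastle v hanti i)) ?_
          exact Finset.inf'_le _ (Finset.mem_univ _)
        -- rewrite the product
        have hprod : (N : ℝ) ^ N * ∏ i : Fin N, cdf' μ (v ⟨N - 1, by omega⟩) / cdf' μ (v i)
            = (N : ℝ) ^ N * (m ^ N * ∏ i : Fin N, (cdf' μ (v i))⁻¹) := by
          rw [hmeq]
          congr 1
          simp_rw [div_eq_mul_inv]
          rw [Finset.prod_mul_distrib, Finset.prod_const, Finset.card_univ, Fintype.card_fin]
        rw [hprod]
        -- compute h v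
        have hstepa : ∀ x : ℝ, (∏ i, g x (v i))
            = if x < m then ENNReal.ofReal (∏ i : Fin N, (cdf' μ (v i))⁻¹) else 0 := by
          intro x
          by_cases hx : x < m
          · rw [if_pos hx, ENNReal.ofReal_prod_of_nonneg (fun i _ => inv_nonneg.2 (cdf'_nonneg _))]
            exact Finset.prod_congr rfl fun i _ => by
              simp only [hgdef]
              exact if_pos ⟨htlt i, lt_of_lt_of_le hx (hmF i)⟩
          · rw [if_neg hx]
            obtain ⟨i0, _, hi0⟩ := Finset.exists_mem_eq_inf' (Finset.univ_nonempty)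
              (fun i : Fin N => cdf' μ (v i))
            refine Finset.prod_eq_zero (Finset.mem_univ i0) ?_
            simp only [hgdef]
            refine if_neg fun hcontra => hx ?_
            rw [hmdef, hi0]
            exact hcontra.2
        have hstepb : h v = ENNReal.ofReal ((N:ℝ) ^ N) *
            (ENNReal.ofReal (m ^ N) * ENNReal.ofReal (∏ i : Fin N, (cdf' μ (v i))⁻¹)) := by
          show ENNReal.ofReal ((N:ℝ) ^ N) * (∫⁻ x in Set.Ioi (0:ℝ), Φ (v, x)) = _
          congr 1
          have hcong : ∀ x : ℝ, Φ (v, x)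
              = Set.indicator (Set.Iio m)
                  (fun x => ENNReal.ofReal ((N:ℝ) * x ^ (N - 1)) *
                    ENNReal.ofReal (∏ i : Fin N, (cdf' μ (v i))⁻¹)) x := by
            intro x
            show ENNReal.ofReal ((N:ℝ) * x ^ (N - 1)) * (∏ i, g x (v i)) = _
            rw [hstepa x, Set.indicator_apply]
            by_cases hx : x < m
            · rw [if_pos hx, if_pos (Set.mem_Iio.2 hx)]
            · rw [if_neg hx, if_neg (fun hh => hx (Set.mem_Iio.1 hh)), mul_zero]
          calc ∫⁻ x in Set.Ioi (0:ℝ), Φ (v, x)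
              = ∫⁻ x in Set.Ioi (0:ℝ), Set.indicator (Set.Iio m)
                  (fun x => ENNReal.ofReal ((N:ℝ) * x ^ (N - 1)) *
                    ENNReal.ofReal (∏ i : Fin N, (cdf' μ (v i))⁻¹)) x :=
                lintegral_congr fun x => hcong x
            _ = ∫⁻ x in Set.Iio m ∩ Set.Ioi (0:ℝ),
                  (ENNReal.ofReal ((N:ℝ) * x ^ (N - 1)) *
                    ENNReal.ofReal (∏ i : Fin N, (cdf' μ (v i))⁻¹)) := by
                rw [lintegral_indicator measurableSet_Iio,
                  Measure.restrict_restrict measurableSet_Iio]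
            _ = ∫⁻ x in Set.Ioo 0 m,
                  (ENNReal.ofReal ((N:ℝ) * x ^ (N - 1)) *
                    ENNReal.ofReal (∏ i : Fin N, (cdf' μ (v i))⁻¹)) := by
                have hset : Set.Iio m ∩ Set.Ioi (0:ℝ) = Set.Ioo 0 m := by
                  ext z
                  simp only [Set.mem_inter_iff, Set.mem_Iio, Set.mem_Ioi, Set.mem_Ioo]
                  tauto
                rw [hset]
            _ = (∫⁻ x in Set.Ioo 0 m, ENNReal.ofReal ((N:ℝ) * x ^ (N - 1))) *
                  ENNReal.ofReal (∏ i : Fin N, (cdf' μ (v i))⁻¹) :=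
                lintegral_mul_const' _ _ ENNReal.ofReal_ne_top
            _ = ENNReal.ofReal (m ^ N) * ENNReal.ofReal (∏ i : Fin N, (cdf' μ (v i))⁻¹) := by
                rw [lintegral_Ioo_Npow hN hm0]
        rw [hstepb]
        rw [ENNReal.ofReal_mul (by positivity), ENNReal.ofReal_mul (by positivity)]
      · rw [Set.indicator_of_notMem (by exact hanti)]
        rw [if_neg (fun hh => hanti hh.1)]
        simp
    · rw [Set.indicator_of_notMem hvA]
      by_cases hanti : Antitone v
      · rw [Set.indicator_of_mem (by exact hanti)]
        symm
        show ENNReal.ofReal ((N:ℝ) ^ N) * (∫⁻ x in Set.Ioi (0:ℝ), Φ (v, x)) = 0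
        obtain ⟨i0, hi0⟩ : ∃ i : Fin N, ¬ t < v i := by
          by_contra hcon
          push_neg at hcon
          exact hvA fun i => hcon i
        have : ∀ x : ℝ, Φ (v, x) = 0 := by
          intro x
          show ENNReal.ofReal ((N:ℝ) * x ^ (N - 1)) * (∏ i, g x (v i)) = 0
          rw [Finset.prod_eq_zero (Finset.mem_univ i0) (by
            simp only [hgdef]
            exact if_neg fun hh => hi0 hh.1), mul_zero]
        simp only [this, lintegral_zero, mul_zero]
      · rw [Set.indicator_of_notMem (by exact hanti)]
  -- measurability of the antitone set
  have hAntiM : MeasurableSet {w : Fin N → ℝ | Antitone w} := by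
    have : {w : Fin N → ℝ | Antitone w}
        = ⋂ (p : Fin N × Fin N) (_ : p.1 ≤ p.2), {w : Fin N → ℝ | w p.2 ≤ w p.1} := by
      ext w
      simp only [Set.mem_setOf_eq, Set.mem_iInter]
      exact ⟨fun hw p hp => hw hp, fun hw a b hab => hw (a, b) hab⟩
    rw [this]
    exact MeasurableSet.iInter fun p => MeasurableSet.iInter fun _ =>
      measurableSet_le (measurable_pi_apply _) (measurable_pi_apply _)
  have main1 : ((Measure.pi fun _ : Fin N => μ).withDensity fun v =>
        ENNReal.ofReal (if Antitone v ∧ ∀ i : Fin N, cdf' μ (v i) ≠ 0 then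
            (N : ℝ) ^ N * ∏ i : Fin N, cdf' μ (v ⟨N - 1, by omega⟩) / cdf' μ (v i) else 0))
      {v : Fin N → ℝ | ∀ i : Fin N, t < v i}
      = ∫⁻ v, {w : Fin N → ℝ | Antitone w}.indicator h v ∂π := by
    rw [withDensity_apply _ hAm, ← lintegral_indicator hAm]
    exact lintegral_congr P1
  have hsymm : ∀ (σ : Equiv.Perm (Fin N)) (v : Fin N → ℝ), h (v ∘ σ) = h v := by
    intro σ v
    show ENNReal.ofReal ((N:ℝ) ^ N) * (∫⁻ x in Set.Ioi (0:ℝ), Φ (v ∘ σ, x))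
      = ENNReal.ofReal ((N:ℝ) ^ N) * (∫⁻ x in Set.Ioi (0:ℝ), Φ (v, x))
    congr 1
    refine lintegral_congr fun x => ?_
    show ENNReal.ofReal _ * (∏ i, g x ((v ∘ σ) i)) = ENNReal.ofReal _ * (∏ i, g x (v i))
    congr 1
    exact Equiv.prod_comp σ fun i => g x (v i)
  have key1 : ∀ σ : Equiv.Perm (Fin N),
      ∫⁻ v, {w : Fin N → ℝ | Antitone (w ∘ σ)}.indicator h v ∂π
        = ∫⁻ v, {w : Fin N → ℝ | Antitone w}.indicator h v ∂π := by
    intro σ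
    have hmp := MeasureTheory.measurePreserving_piCongrLeft (fun _ : Fin N => μ)
      ((σ.symm : Equiv.Perm (Fin N)) : Fin N ≃ Fin N)
    have he : ∀ v : Fin N → ℝ,
        (MeasurableEquiv.piCongrLeft (fun _ : Fin N => ℝ)
          ((σ.symm : Equiv.Perm (Fin N)) : Fin N ≃ Fin N)) v = v ∘ σ := by
      intro v
      funext j
      have h1 := Equiv.piCongrLeft_apply_apply (fun _ : Fin N => ℝ)
        ((σ.symm : Equiv.Perm (Fin N)) : Fin N ≃ Fin N) v (σ j)
      rw [Equiv.symm_apply_apply] at h1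
      simp only [MeasurableEquiv.coe_piCongrLeft]
      exact h1
    have hDm : Measurable fun w : Fin N → ℝ =>
        {w : Fin N → ℝ | Antitone w}.indicator h w := hhm.indicator hAntiM
    calc ∫⁻ v, {w : Fin N → ℝ | Antitone (w ∘ σ)}.indicator h v ∂π
        = ∫⁻ v, {w : Fin N → ℝ | Antitone w}.indicator h
            ((MeasurableEquiv.piCongrLeft (fun _ : Fin N => ℝ)
              ((σ.symm : Equiv.Perm (Fin N)) : Fin N ≃ Fin N)) v) ∂π := by
          refine lintegral_congr fun v => ?_
          rw [he v]
          by_cases hv : Antitone (v ∘ σ)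
          · rw [Set.indicator_of_mem (by exact hv), Set.indicator_of_mem (by exact hv),
              hsymm σ v]
          · rw [Set.indicator_of_notMem (by exact hv), Set.indicator_of_notMem (by exact hv)]
      _ = ∫⁻ w, {w : Fin N → ℝ | Antitone w}.indicator h w ∂π := hmp.lintegral_comp hDm
  have hκ : ∀ σ : Equiv.Perm (Fin N), Measurable fun v : Fin N → ℝ =>
      {w : Fin N → ℝ | Antitone (w ∘ σ)}.indicator h v := by
    intro σ
    refine hhm.indicator ?_
    have hmeq : {w : Fin N → ℝ | Antitone (w ∘ σ)}
        = (fun w : Fin N → ℝ => w ∘ σ) ⁻¹' {w | Antitone w} := rfl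
    rw [hmeq]
    exact (measurable_pi_lambda _ fun j => measurable_pi_apply (σ j)) hAntiM
  have key2 : ∫⁻ v, h v ∂π
      = (N.factorial : ℝ≥0∞) * ∫⁻ v, {w : Fin N → ℝ | Antitone w}.indicator h v ∂π := by
    have hae : ∀ᵐ v ∂π, h v = ∑ σ : Equiv.Perm (Fin N),
        {w : Fin N → ℝ | Antitone (w ∘ σ)}.indicator h v := by
      filter_upwards [ae_injective μ (n := N)] with v hv
      obtain ⟨σ₀, hσ₀, huniq⟩ := antitone_sort_existsUnique hv
      have hterm : ∀ σ : Equiv.Perm (Fin N),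
          {w : Fin N → ℝ | Antitone (w ∘ σ)}.indicator h v = if σ = σ₀ then h v else 0 := by
        intro σ
        by_cases hσ : Antitone (v ∘ σ)
        · rw [Set.indicator_of_mem (by exact hσ), if_pos (huniq σ hσ)]
        · rw [Set.indicator_of_notMem (by exact hσ), if_neg]
          intro hcon
          exact hσ (hcon ▸ hσ₀)
      rw [Finset.sum_congr rfl fun σ _ => hterm σ,
        Finset.sum_ite_eq' Finset.univ σ₀ fun _ => h v, if_pos (Finset.mem_univ σ₀)]
    rw [lintegral_congr_ae hae, lintegral_finset_sum _ (fun σ _ => hκ σ)]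
    rw [Finset.sum_congr rfl fun σ _ => key1 σ, Finset.sum_const, Finset.card_univ,
      Fintype.card_perm, Fintype.card_fin, nsmul_eq_mul]
  have compute : ∫⁻ v, h v ∂π
      = ENNReal.ofReal ((N:ℝ) ^ N) *
          ∫⁻ x in Set.Ioi (0:ℝ), ENNReal.ofReal ((N:ℝ) * x ^ (N - 1)) *
            (ENNReal.ofReal (-Real.log (max x c))) ^ N := by
    calc ∫⁻ v, h v ∂π
        = ENNReal.ofReal ((N:ℝ) ^ N) * ∫⁻ v, (∫⁻ x in Set.Ioi (0:ℝ), Φ (v, x)) ∂π := by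
          show (∫⁻ v, ENNReal.ofReal ((N:ℝ) ^ N) * (∫⁻ x in Set.Ioi (0:ℝ), Φ (v, x)) ∂π) = _
          exact lintegral_const_mul' _ _ ENNReal.ofReal_ne_top
      _ = ENNReal.ofReal ((N:ℝ) ^ N) * ∫⁻ x in Set.Ioi (0:ℝ), (∫⁻ v, Φ (v, x) ∂π) := by
          congr 1
          exact lintegral_lintegral_swap hΦm.aemeasurable
      _ = ENNReal.ofReal ((N:ℝ) ^ N) *
            ∫⁻ x in Set.Ioi (0:ℝ), ENNReal.ofReal ((N:ℝ) * x ^ (N - 1)) *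
              (ENNReal.ofReal (-Real.log (max x c))) ^ N := by
          congr 1
          refine setLIntegral_congr_fun measurableSet_Ioi (fun x hx => ?_)
          have hstep : ∫⁻ v, Φ (v, x) ∂π
              = ENNReal.ofReal ((N:ℝ) * x ^ (N - 1)) * (∫⁻ y, g x y ∂μ) ^ N := by
            calc ∫⁻ v, Φ (v, x) ∂π
                = ENNReal.ofReal ((N:ℝ) * x ^ (N - 1)) * ∫⁻ v, ∏ i, g x (v i) ∂π := by
                  show (∫⁻ v, ENNReal.ofReal ((N:ℝ) * x ^ (N - 1)) * ∏ i, g x (v i) ∂π) = _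
                  exact lintegral_const_mul' _ _ ENNReal.ofReal_ne_top
              _ = ENNReal.ofReal ((N:ℝ) * x ^ (N - 1)) * (∫⁻ y, g x y ∂μ) ^ N := by
                  rw [lintegral_pi_pow μ (hgm x)]
          rw [hstep, phi_eq μ hx]
  -- continuity of the real integrand
  have hmaxne : ∀ x : ℝ, max x c ≠ 0 := fun x =>
    ne_of_gt (lt_of_lt_of_le ht (le_max_right x c))
  have hψcont : Continuous fun x : ℝ => (N:ℝ) * x ^ (N - 1) * (-Real.log (max x c)) ^ N := by
    refine (continuous_const.mul (continuous_pow _)).mul ?_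
    exact ((((continuous_id.max continuous_const).log hmaxne)).neg).pow _
  have hsplit : ∫⁻ x in Set.Ioi (0:ℝ), ENNReal.ofReal ((N:ℝ) * x ^ (N - 1)) *
        (ENNReal.ofReal (-Real.log (max x c))) ^ N
      = ENNReal.ofReal (∫ x in Set.Ioc (0:ℝ) 1,
          ((N:ℝ) * x ^ (N - 1) * (-Real.log (max x c)) ^ N)) := by
    have hunion : Set.Ioc (0:ℝ) 1 ∪ Set.Ioi 1 = Set.Ioi 0 :=
      Set.Ioc_union_Ioi_eq_Ioi zero_le_one
    rw [← hunion, lintegral_union measurableSet_Ioi (Set.Ioc_disjoint_Ioi le_rfl)]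
    have hzero : ∫⁻ x in Set.Ioi (1:ℝ), ENNReal.ofReal ((N:ℝ) * x ^ (N - 1)) *
        (ENNReal.ofReal (-Real.log (max x c))) ^ N = 0 := by
      rw [setLIntegral_congr_fun measurableSet_Ioi (fun x hx => ?_), lintegral_zero]
      have hmx : max x c = x := max_eq_left (le_trans hc1 (le_of_lt hx))
      rw [hmx]
      have hlog0 : ENNReal.ofReal (-Real.log x) = 0 :=
        ENNReal.ofReal_eq_zero.2 (neg_nonpos.2 (Real.log_nonneg (le_of_lt hx)))
      rw [hlog0, zero_pow (by omega), mul_zero]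
    rw [hzero, add_zero]
    have hcong : ∫⁻ x in Set.Ioc (0:ℝ) 1, ENNReal.ofReal ((N:ℝ) * x ^ (N - 1)) *
        (ENNReal.ofReal (-Real.log (max x c))) ^ N
        = ∫⁻ x in Set.Ioc (0:ℝ) 1,
            ENNReal.ofReal ((N:ℝ) * x ^ (N - 1) * (-Real.log (max x c)) ^ N) := by
      refine setLIntegral_congr_fun measurableSet_Ioc (fun x hx => ?_)
      have hnn : 0 ≤ -Real.log (max x c) :=
        neg_nonneg.2 (Real.log_nonpos (le_max_of_le_right ht.le) (max_le hx.2 hc1))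
      have hx0 : (0:ℝ) ≤ x := hx.1.le
      rw [← ENNReal.ofReal_pow hnn, ← ENNReal.ofReal_mul (by positivity)]
    rw [hcong]
    rw [← ofReal_integral_eq_lintegral_ofReal]
    · exact (hψcont.integrableOn_Icc).mono_set Set.Ioc_subset_Icc_self
    · refine (ae_restrict_iff' measurableSet_Ioc).2 (ae_of_all _ fun x hx => ?_)
      have hnn : 0 ≤ -Real.log (max x c) :=
        neg_nonneg.2 (Real.log_nonpos (le_max_of_le_right ht.le) (max_le hx.2 hc1))
      have hx0 : (0:ℝ) ≤ x := hx.1.le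
      positivity
  have hexps : Real.exp (-s) = c := by rw [hsdef, neg_neg, Real.exp_log ht]
  have hreal : ∫ x in Set.Ioc (0:ℝ) 1, ((N:ℝ) * x ^ (N - 1) * (-Real.log (max x c)) ^ N)
      = ∫ u in (0:ℝ)..s, ((N:ℝ) * (u ^ (N - 1) * Real.exp (-(N:ℝ) * u))) := by
    have hI1 : IntervalIntegrable
        (fun x : ℝ => (N:ℝ) * x ^ (N - 1) * (-Real.log (max x c)) ^ N) volume 0 c :=
      hψcont.intervalIntegrable _ _
    have hI2 : IntervalIntegrable
        (fun x : ℝ => (N:ℝ) * x ^ (N - 1) * (-Real.log (max x c)) ^ N) volume c 1 :=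
      hψcont.intervalIntegrable _ _
    rw [← intervalIntegral.integral_of_le zero_le_one,
      ← intervalIntegral.integral_add_adjacent_intervals hI1 hI2]
    have hpiece1 : ∫ x in (0:ℝ)..c, ((N:ℝ) * x ^ (N - 1) * (-Real.log (max x c)) ^ N)
        = c ^ N * s ^ N := by
      have hcg : ∫ x in (0:ℝ)..c, ((N:ℝ) * x ^ (N - 1) * (-Real.log (max x c)) ^ N)
          = ∫ x in (0:ℝ)..c, ((N:ℝ) * x ^ (N - 1) * s ^ N) := by
        refine intervalIntegral.integral_congr fun x hx => ?_
        rw [Set.uIcc_of_le ht.le] at hx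
        rw [max_eq_right hx.2, hsdef]
      rw [hcg, intervalIntegral.integral_mul_const, integral_Npow hN]
    have hpiece2 : ∫ x in c..(1:ℝ), ((N:ℝ) * x ^ (N - 1) * (-Real.log (max x c)) ^ N)
        = ∫ x in c..(1:ℝ), ((N:ℝ) * x ^ (N - 1) * (-Real.log x) ^ N) := by
      refine intervalIntegral.integral_congr fun x hx => ?_
      rw [Set.uIcc_of_le hc1] at hx
      rw [max_eq_left hx.1]
    rw [hpiece1, hpiece2, subst_exp hN ht hc1, ← hsdef, ibp_exp hN hs0]
    have hcs : Real.exp (-(N:ℝ) * s) = c ^ N := by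
      rw [show -(N:ℝ) * s = (N:ℕ) * (-s) by push_cast; ring, Real.exp_nat_mul, hexps]
    rw [hcs]
    ring
  -- final assembly
  have hfac_ne0 : (N.factorial : ℝ≥0∞) ≠ 0 := by
    simp [Nat.factorial_ne_zero]
  have hfac_top : (N.factorial : ℝ≥0∞) ≠ ⊤ := ENNReal.natCast_ne_top _
  have hcancel : ∀ a b : ℝ≥0∞, (N.factorial : ℝ≥0∞) * a = (N.factorial : ℝ≥0∞) * b → a = b :=
    fun a b hab => (ENNReal.mul_right_inj hfac_ne0 hfac_top).1 hab
  refine hcancel _ _ ?_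
  rw [main1, ← key2, compute, hsplit, hreal]
  rw [← ENNReal.ofReal_mul (by positivity)]
  rw [show ((N.factorial : ℝ≥0∞)) = ENNReal.ofReal (N.factorial : ℝ) by
    rw [ENNReal.ofReal_natCast]]
  rw [← ENNReal.ofReal_mul (by positivity)]
  congr 1
  have hJ1 : ∫ u in (0:ℝ)..s, ((N:ℝ) * (u ^ (N - 1) * Real.exp (-(N:ℝ) * u)))
      = (N:ℝ) * ∫ u in (0:ℝ)..s, (u ^ (N - 1) * Real.exp (-(N:ℝ) * u)) :=
    intervalIntegral.integral_const_mul _ _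
  have hJ2 : ∫ u in (0:ℝ)..s,
        ((N:ℝ) ^ N / ((N - 1).factorial : ℝ) * u ^ (N - 1) * Real.exp (-(N:ℝ) * u))
      = ((N:ℝ) ^ N / ((N - 1).factorial : ℝ)) *
          ∫ u in (0:ℝ)..s, (u ^ (N - 1) * Real.exp (-(N:ℝ) * u)) := by
    simp_rw [mul_assoc]
    exact intervalIntegral.integral_const_mul _ _
  rw [hJ1, hJ2]
  have hfacN : (N.factorial : ℝ) = (N : ℝ) * ((N - 1).factorial : ℝ) := by
    exact_mod_cast (Nat.mul_factorial_pred (by omega)).symm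
  have hfne : ((N - 1).factorial : ℝ) ≠ 0 := by
    exact_mod_cast Nat.factorial_ne_zero _
  rw [hfacN]
  field_simp
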